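/- Let S be an antichain cover of Fin p and let c be maximal independent of S. Then S ∪ {c} is an antichain cover of Fin p and S ∪ {c} is a parent of S. -/
import Mathlib


/-- `X` covers `Fin p`. -/
def Covers {p : ℕ} (X : Finset (Finset (Fin p))) : Prop :=
  ∀ i : Fin p, ∃ σ ∈ X, i ∈ σ

/-- `S` is an antichain cover of `Fin p`. -/
def AntichainCover {p : ℕ} (S : Finset (Finset (Fin p))) : Prop :=
  IsAntichain (· ⊆ ·) (S : Set (Finset (Fin p))) ∧ Covers S

/-- `S ⪯ S'` : for every `σ ∈ S` there exists `σ' ∈ S'` with `σ' ⊆ σ`. -/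
def Preceq {p : ℕ} (S S' : Finset (Finset (Fin p))) : Prop :=
  ∀ σ ∈ S, ∃ σ' ∈ S', σ' ⊆ σ

/-- `S'` is a parent of `S` in the poset of antichain covers of `Fin p` ordered by `⪯`. -/
def Parent {p : ℕ} (S S' : Finset (Finset (Fin p))) : Prop :=
  Preceq S S' ∧ S ≠ S' ∧
    ¬ ∃ S'' : Finset (Finset (Fin p)),
        AntichainCover S'' ∧ S'' ≠ S ∧ S'' ≠ S' ∧ Preceq S S'' ∧ Preceq S'' S'

/-- `c` is independent of `S`: incomparable with every member of `S`. -/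
def IndependentOf {p : ℕ} (c : Finset (Fin p)) (S : Finset (Finset (Fin p))) : Prop :=
  ∀ σ ∈ S, ¬ σ ⊆ c ∧ ¬ c ⊆ σ

/-- `c` is maximal independent of `S`. -/
def MaxIndependentOf {p : ℕ} (c : Finset (Fin p)) (S : Finset (Finset (Fin p))) : Prop :=
  IndependentOf c S ∧ ∀ d : Finset (Fin p), c ⊂ d → ¬ IndependentOf d S

theorem insert_maxIndependent_isParent (p : ℕ) (S : Finset (Finset (Fin p)))
    (c : Finset (Fin p)) (hS : AntichainCover S) (hc : MaxIndependentOf c S) :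
    AntichainCover (insert c S) ∧ Parent S (insert c S) := by
  obtain ⟨hanti, hcov⟩ := hS
  obtain ⟨hind, hmax⟩ := hc
  have hcS : c ∉ S := fun h => (hind c h).2 subset_rfl
  have hAC : AntichainCover (insert c S) := by
    constructor
    · intro a ha b hb hab h
      simp only [Finset.coe_insert, Set.mem_insert_iff, Finset.mem_coe] at ha hb
      rcases ha with rfl | ha
      · rcases hb with rfl | hb
        · exact hab rfl
        · exact (hind b hb).2 h
      · rcases hb with rfl | hb
        · exact (hind a ha).1 h
        · exact hanti ha hb hab h
    · intro i
      obtain ⟨σ, hσ, hi⟩ := hcov i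
      exact ⟨σ, Finset.mem_insert_of_mem hσ, hi⟩
  refine ⟨hAC, ?_, ?_, ?_⟩
  · intro σ hσ; exact ⟨σ, Finset.mem_insert_of_mem hσ, subset_rfl⟩
  · intro h; exact hcS (h ▸ Finset.mem_insert_self c S)
  · rintro ⟨S'', ⟨hanti'', _⟩, hne1, hne2, h1, h2⟩
    have key : ∀ τ ∈ S'', τ = c ∨ τ ∈ S := by
      intro τ hτ
      obtain ⟨σ', hσ', hsub⟩ := h2 τ hτ
      have eqarg : ∀ σ ∈ S, σ ⊆ τ → τ = σ := by
        intro σ hσS hστ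
        obtain ⟨τ', hτ', hτ'σ⟩ := h1 σ hσS
        have hττ : τ' = τ := by
          by_contra hne
          exact hanti'' hτ' hτ hne (hτ'σ.trans hστ)
        exact subset_antisymm (hττ ▸ hτ'σ) hστ
      rcases Finset.mem_insert.mp hσ' with rfl | hσ'S
      · by_cases hτc : τ = σ'
        · exact Or.inl hτc
        · exfalso
          have hss : σ' ⊂ τ := ⟨hsub, fun h => hτc (subset_antisymm (le_antisymm hsub h ▸ subset_rfl) hsub)⟩
          have := hmax τ hss
          rw [IndependentOf] at this
          push_neg at this
          obtain ⟨σ, hσS, hbad⟩ := this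
          by_cases hστ : σ ⊆ τ
          · have := eqarg σ hσS hστ
            exact (hind σ hσS).2 (this ▸ hsub)
          · exact (hind σ hσS).2 (hsub.trans (hbad hστ))
      · exact Or.inr (eqarg σ' hσ'S hsub ▸ hσ'S)
    have hSsub : S ⊆ S'' := by
      intro σ hσ
      obtain ⟨τ, hτ, hτσ⟩ := h1 σ hσ
      rcases key τ hτ with rfl | hτS
      · exact absurd hτσ (hind σ hσ).2
      · have : τ = σ := by
          by_contra hne
          exact hanti hτS hσ hne hτσ
        exact this ▸ hτ
    by_cases hcS'' : c ∈ S''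
    · apply hne2
      apply subset_antisymm
      · intro τ hτ
        rcases key τ hτ with rfl | hτS
        · exact Finset.mem_insert_self _ _
        · exact Finset.mem_insert_of_mem hτS
      · intro τ hτ
        rcases Finset.mem_insert.mp hτ with rfl | hτS
        · exact hcS''
        · exact hSsub hτS
    · apply hne1
      apply subset_antisymm
      · intro τ hτ
        rcases key τ hτ with rfl | hτS
        · exact absurd hτ hcS''
        · exact hτS
      · exact hSsub
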